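/- Let q be a prime power, k,r ≥ 2, and let U = {(s, s^q, s^{q^2}, …, s^{q^{r-1}}) : s ∈ F_{q^k}} ⊆ F_{q^k}^r. For a ∈ F_{q^k} with N_{F_{q^k}/F_q}(a) = 1, let σ_a = {(s, a s, s^{q^2}, …, s^{q^{r-1}}) : s ∈ F_{q^k}}. Then U ∩ σ_a is an F_q-subspace of F_{q^k}^r of F_q-dimension exactly 1. -/

import Mathlib

open Module

/-- The `q`-system `U = {(s, s^q, s^{q^2}, …, s^{q^{r-1}}) : s ∈ K}` (as a set). -/
def uSet (F K : Type*) [Field F] [Fintype F] [Field K] (r : ℕ) : Set (Fin r → K) :=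
  Set.range fun s : K => fun i : Fin r => s ^ Fintype.card F ^ (i : ℕ)

/-- The set `σ_a = {(s, a s, s^{q^2}, …, s^{q^{r-1}}) : s ∈ K}`. -/
def sigmaSet (F K : Type*) [Field F] [Fintype F] [Field K] (r : ℕ) (a : K) :
    Set (Fin r → K) :=
  Set.range fun s : K => fun i : Fin r =>
    if (i : ℕ) = 1 then a * s else s ^ Fintype.card F ^ (i : ℕ)

open Polynomial

section helpers
variable {F K : Type*} [Field F] [Fintype F] [Field K] [Algebra F K]

private lemma pow_q_pow_fixed (e : K) (he : e ^ Fintype.card F = e) (i : ℕ) :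
    e ^ Fintype.card F ^ i = e := by
  induction i with
  | zero => simpa using pow_one e
  | succ i ih => rw [pow_succ, pow_mul, ih, he]

private lemma algebraMap_pow_card (c : F) :
    (algebraMap F K c) ^ Fintype.card F = algebraMap F K c := by
  rw [← map_pow, FiniteField.pow_card]

private lemma exists_of_pow_card_eq (x : K) (hx : x ^ Fintype.card F = x) :
    ∃ c : F, algebraMap F K c = x := by
  classical
  set q := Fintype.card F with hqdef
  have hq : 1 < q := Fintype.one_lt_card
  by_contra hc
  push_neg at hc
  have hf : (X ^ q - X : K[X]) ≠ 0 := FiniteField.X_pow_card_sub_X_ne_zero K hq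
  set S : Finset K := Finset.univ.image (algebraMap F K) with hS
  have hxS : x ∉ S := by
    simp only [hS, Finset.mem_image, Finset.mem_univ, true_and]
    rintro ⟨c, hcx⟩
    exact hc c hcx
  have hmem : ∀ y : K, y ^ q = y → y ∈ (X ^ q - X : K[X]).roots.toFinset := by
    intro y hy
    rw [Multiset.mem_toFinset, mem_roots hf]
    simp [IsRoot, hy]
  have hsub : insert x S ⊆ (X ^ q - X : K[X]).roots.toFinset := by
    intro y hy
    rcases Finset.mem_insert.mp hy with rfl | hyS
    · exact hmem _ hx
    · obtain ⟨c, -, rfl⟩ := Finset.mem_image.mp hyS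
      exact hmem _ (algebraMap_pow_card c)
  have h1 : (insert x S).card = q + 1 := by
    rw [Finset.card_insert_of_notMem hxS, hS,
      Finset.card_image_of_injective _ (algebraMap F K).injective, Finset.card_univ]
  have h2 : (X ^ q - X : K[X]).roots.toFinset.card ≤ q := by
    refine le_trans (Multiset.toFinset_card_le _) ?_
    have := (X ^ q - X : K[X]).card_roots'
    rwa [FiniteField.X_pow_card_sub_X_natDegree_eq K hq] at this
  have := Finset.card_le_card hsub
  omega

private lemma geom_nat (q : ℕ) (hq : 1 ≤ q) :
    ∀ k : ℕ, (q - 1) * (∑ i ∈ Finset.range k, q ^ i) = q ^ k - 1 := by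
  intro k
  induction k with
  | zero => simp
  | succ n ih =>
    rw [Finset.sum_range_succ, Nat.mul_add, ih, Nat.sub_mul, one_mul, ← pow_succ']
    have h1 : 1 ≤ q ^ n := Nat.one_le_pow _ _ (by omega)
    have h2 : q ^ n ≤ q ^ (n + 1) := Nat.pow_le_pow_right (by omega) (by omega)
    omega

end helpers

theorem stmt4 (F K : Type*) [Field F] [Fintype F] [Field K] [Algebra F K]
    [FiniteDimensional F K] (k r : ℕ) (hk : 2 ≤ k) (hr : 2 ≤ r)
    (hfr : finrank F K = k) (a : K) (ha : Algebra.norm F a = 1) :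
    ∃ V : Submodule F (Fin r → K),
      (V : Set (Fin r → K)) = uSet F K r ∩ sigmaSet F K r a ∧ finrank F V = 1 := by
  classical
  have hFK : Finite K := Module.finite_of_finite F
  haveI : Fintype K := Fintype.ofFinite K
  set q := Fintype.card F with hqdef
  have hq1 : 1 < q := Fintype.one_lt_card
  have hcardK : Fintype.card K = q ^ k := by
    rw [card_eq_pow_finrank (K := F) (V := K), hfr]
  have ha0 : a ≠ 0 := by
    rintro rfl
    rw [Algebra.norm_zero] at ha
    exact zero_ne_one ha
  -- char and Frobenius
  set p := ringChar F with hpdef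
  haveI : CharP F p := ringChar.charP F
  obtain ⟨n, hp, hcardF⟩ := FiniteField.card F p
  haveI : CharP K p := charP_of_injective_algebraMap (algebraMap F K).injective p
  haveI : Fact p.Prime := ⟨hp⟩
  haveI : ExpChar K p := .prime hp
  let frobHom : K →ₐ[F] K :=
    { iterateFrobenius K p (n : ℕ) with
      commutes' := fun c => by
        show iterateFrobenius K p (n : ℕ) (algebraMap F K c) = algebraMap F K c
        rw [iterateFrobenius_def, ← hcardF]
        exact algebraMap_pow_card c }
  have hfrobHom : ∀ x : K, frobHom x = x ^ q := by
    intro x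
    show iterateFrobenius K p (n : ℕ) x = x ^ q
    rw [iterateFrobenius_def, ← hcardF]
  let φ : K ≃ₐ[F] K := AlgEquiv.ofBijective frobHom
    (Finite.injective_iff_bijective.mp frobHom.toRingHom.injective)
  have hφ : ∀ x : K, φ x = x ^ q := hfrobHom
  have hφpow : ∀ (i : ℕ) (x : K), (φ ^ i) x = x ^ q ^ i := by
    intro i
    induction i with
    | zero => intro x; simp
    | succ i ih =>
      intro x
      rw [pow_succ', AlgEquiv.mul_apply, hφ, ih, ← pow_mul, ← pow_succ]
  -- all elements roots argument: φ ^ d ≠ 1 for 0 < d < k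
  have hne : ∀ d : ℕ, 0 < d → d < k → (φ ^ d) ≠ 1 := by
    intro d hd1 hdk h1
    have hall : ∀ x : K, x ^ q ^ d = x := by
      intro x
      have := congrArg (fun e : K ≃ₐ[F] K => e x) h1
      simpa [hφpow] using this
    have hqd : 1 < q ^ d := Nat.one_lt_pow (by omega) hq1
    have hf : (X ^ q ^ d - X : K[X]) ≠ 0 := FiniteField.X_pow_card_sub_X_ne_zero K hqd
    have hsub : (Finset.univ : Finset K) ⊆ (X ^ q ^ d - X : K[X]).roots.toFinset := by
      intro y _
      rw [Multiset.mem_toFinset, mem_roots hf]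
      simp [IsRoot, hall y]
    have h2 : (X ^ q ^ d - X : K[X]).roots.toFinset.card ≤ q ^ d := by
      refine le_trans (Multiset.toFinset_card_le _) ?_
      have := (X ^ q ^ d - X : K[X]).card_roots'
      rwa [FiniteField.X_pow_card_sub_X_natDegree_eq K hqd] at this
    have h3 := Finset.card_le_card hsub
    rw [Finset.card_univ, hcardK] at h3
    have h4 : q ^ d < q ^ k := Nat.pow_lt_pow_right hq1 hdk
    omega
  -- card of automorphism group
  have hGcard : Fintype.card (K ≃ₐ[F] K) = k := by
    rw [← Nat.card_eq_fintype_card, IsGalois.card_aut_eq_finrank, hfr]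
  have hk0 : 0 < k := by omega
  have hord : orderOf φ = k := by
    have hdvd : orderOf φ ∣ k := by
      have := orderOf_dvd_card (x := φ)
      rwa [hGcard] at this
    rcases Nat.lt_or_ge (orderOf φ) k with hlt | hge
    · have hpos : 0 < orderOf φ := orderOf_pos φ
      exact absurd (pow_orderOf_eq_one φ) (hne _ hpos hlt)
    · exact le_antisymm (Nat.le_of_dvd hk0 hdvd) hge
  have hinj : Function.Injective (fun i : Fin k => φ ^ (i : ℕ)) := by
    intro i j hij
    have := pow_injOn_Iio_orderOf (x := φ) (by rw [hord]; exact i.2) (by rw [hord]; exact j.2) hij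
    exact Fin.ext this
  have hbij : Function.Bijective (fun i : Fin k => φ ^ (i : ℕ)) :=
    (Fintype.bijective_iff_injective_and_card _).mpr ⟨hinj, by simp [hGcard]⟩
  -- norm computation
  set m := ∑ i ∈ Finset.range k, q ^ i with hmdef
  have ham : a ^ m = 1 := by
    have h1 : algebraMap F K (Algebra.norm F a) = ∏ σ : K ≃ₐ[F] K, σ a :=
      Algebra.norm_eq_prod_automorphisms F a
    rw [ha, map_one] at h1
    have h2 : ∏ i : Fin k, a ^ q ^ (i : ℕ) = ∏ σ : K ≃ₐ[F] K, σ a :=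
      Fintype.prod_bijective _ hbij _ _ (fun i => (hφpow (i : ℕ) a).symm)
    rw [← h2] at h1
    rw [Finset.prod_pow_eq_pow_sum] at h1
    rw [hmdef, ← Fin.sum_univ_eq_sum_range (fun i => q ^ i) k]
    exact h1.symm
  have hm0 : 0 < m := by
    rw [hmdef]
    refine Finset.sum_pos (fun i _ => pow_pos (by omega) i) ?_
    exact Finset.nonempty_range_iff.mpr (by omega)
  -- find s₀ with s₀ ^ (q-1) = a
  set a' : Kˣ := Units.mk0 a ha0 with ha'def
  have ham' : a' ^ m = 1 := by
    ext
    simp [ha'def, ham]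
  obtain ⟨g, hg⟩ := IsCyclic.exists_generator (α := Kˣ)
  have hordg : orderOf g = q ^ k - 1 := by
    rw [orderOf_eq_card_of_forall_mem_zpowers hg, Nat.card_eq_fintype_card,
      Fintype.card_units, hcardK]
  obtain ⟨t, ht⟩ : ∃ t : ℕ, g ^ t = a' :=
    (Submonoid.mem_powers_iff _ _).mp (mem_powers_iff_mem_zpowers.mpr (hg a'))
  have hdvd : orderOf g ∣ t * m := by
    apply orderOf_dvd_of_pow_eq_one
    rw [pow_mul, ht, ham']
  rw [hordg, ← geom_nat q (by omega) k, ← hmdef] at hdvd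
  have hq1dvd : (q - 1) ∣ t := ((Nat.mul_dvd_mul_iff_right hm0).mp hdvd)
  obtain ⟨u, rfl⟩ := hq1dvd
  set s₀ : K := ((g ^ u : Kˣ) : K) with hs₀def
  have hs₀0 : s₀ ≠ 0 := Units.ne_zero _
  have hs₀a : s₀ ^ (q - 1) = a := by
    have h1 : (g ^ u) ^ (q - 1) = a' := by
      rw [← pow_mul, mul_comm u (q - 1)]
      exact ht
    have := congrArg (Units.val) h1
    simpa [hs₀def, ha'def] using this
  have hs₀q : s₀ ^ q = a * s₀ := by
    have h : s₀ ^ q = s₀ ^ (q - 1) * s₀ := by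
      rw [← pow_succ]
      congr 1
      omega
    rw [h, hs₀a]
  -- the vector and the submodule
  set v : Fin r → K := fun i => s₀ ^ q ^ (i : ℕ) with hvdef
  have hv0 : v ≠ 0 := by
    intro h
    have := congrFun h ⟨0, by omega⟩
    simp only [hvdef, Pi.zero_apply] at this
    rw [pow_zero, pow_one] at this
    exact hs₀0 this
  refine ⟨Submodule.span F {v}, ?_, finrank_span_singleton hv0⟩
  ext x
  simp only [SetLike.mem_coe, Submodule.mem_span_singleton, Set.mem_inter_iff]
  constructor
  · rintro ⟨c, rfl⟩
    set e : K := algebraMap F K c with hedef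
    have he : e ^ q = e := algebraMap_pow_card c
    have hsmul : ∀ i : Fin r, (c • v) i = e * s₀ ^ q ^ (i : ℕ) := by
      intro i
      simp [hvdef, Algebra.smul_def, hedef]
    constructor
    · refine ⟨e * s₀, funext fun i => ?_⟩
      show (e * s₀) ^ q ^ (i : ℕ) = (c • v) i
      rw [mul_pow, pow_q_pow_fixed e he, ← hsmul i]
    · refine ⟨e * s₀, funext fun i => ?_⟩
      show (if (i : ℕ) = 1 then a * (e * s₀) else (e * s₀) ^ q ^ (i : ℕ)) = (c • v) i
      by_cases hi : (i : ℕ) = 1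
      · rw [if_pos hi, hsmul i, hi, pow_one, hs₀q]
        ring
      · rw [if_neg hi, mul_pow, pow_q_pow_fixed e he, ← hsmul i]
  · rintro ⟨⟨s, hsu⟩, ⟨t', hst⟩⟩
    have h0 : s = t' := by
      have h1 : s ^ q ^ (0 : ℕ) = x ⟨0, by omega⟩ := congrFun hsu ⟨0, by omega⟩
      have h2 : (if (0 : ℕ) = 1 then a * t' else t' ^ q ^ (0 : ℕ)) = x ⟨0, by omega⟩ :=
        congrFun hst ⟨0, by omega⟩
      rw [pow_zero, pow_one] at h1
      rw [if_neg (by norm_num)] at h2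
      rw [pow_zero, pow_one] at h2
      rw [h1, ← h2]
    subst h0
    have hs : s ^ q = a * s := by
      have h1 : s ^ q ^ (1 : ℕ) = x ⟨1, by omega⟩ := congrFun hsu ⟨1, by omega⟩
      have h2 : (if (1 : ℕ) = 1 then a * s else s ^ q ^ (1 : ℕ)) = x ⟨1, by omega⟩ :=
        congrFun hst ⟨1, by omega⟩
      rw [if_pos rfl] at h2
      rw [pow_one] at h1
      rw [h1, ← h2]
    by_cases hs0 : s = 0
    · refine ⟨0, ?_⟩
      rw [zero_smul]
      rw [← hsu]
      funext i
      show (0 : K) = s ^ q ^ (i : ℕ)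
      rw [hs0, zero_pow (pow_pos (show 0 < q by omega) (i : ℕ)).ne']
    · have hsq1 : s ^ (q - 1) = a := by
        have h : s ^ (q - 1) * s = a * s := by
          rw [← pow_succ]
          have : q - 1 + 1 = q := by omega
          rw [this, hs]
        exact mul_right_cancel₀ hs0 h
      set w : K := s * s₀⁻¹ with hwdef
      have hw1 : w ^ (q - 1) = 1 := by
        rw [hwdef, mul_pow, hsq1, inv_pow, hs₀a, mul_inv_cancel₀ ha0]
      have hwq : w ^ q = w := by
        have h : w ^ q = w ^ (q - 1) * w := by
          rw [← pow_succ]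
          congr 1
          omega
        rw [h, hw1, one_mul]
      obtain ⟨c, hc⟩ := exists_of_pow_card_eq w hwq
      refine ⟨c, ?_⟩
      rw [← hsu]
      funext i
      have hsw : s = w * s₀ := by
        rw [hwdef]
        field_simp
      show (c • v) i = s ^ q ^ (i : ℕ)
      simp only [Pi.smul_apply, hvdef, Algebra.smul_def, hc]
      rw [hsw, mul_pow, pow_q_pow_fixed w hwq]
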